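/- Let α and β be finite types, let R ⊆ α × β be a nonempty finite relation, and let (X, Y) be a pair of jointly distributed random variables with values in α × β whose joint support is contained in R. Then for every real p > 0: (1/p)·H[X] + H[Y | X] ≤ log₂( (Σ_{a ∈ α} deg_{R,α}(a)^p)^{1/p} ), where H denotes Shannon entropy and H[Y|X] conditional Shannon entropy, both with base-2 logarithms. -/

import Mathlib

/-- Shannon entropy (base 2) of a probability mass function on a finite type,
with the convention `0 * log 0 = 0` (automatic since `0 * x = 0`). -/
noncomputable def shannonEntropy {α : Type*} [Fintype α] (μ : α → ℝ) : ℝ :=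
  - ∑ t, μ t * Real.logb 2 (μ t)

/-- Weighted Jensen inequality for `logb 2`. -/
lemma jensen_logb_aux {ι : Type*} [Fintype ι] (w f : ι → ℝ)
    (hw0 : ∀ i, 0 ≤ w i) (hw1 : ∑ i, w i = 1)
    (hf : ∀ i, w i ≠ 0 → 0 < f i) :
    ∑ i, w i * Real.logb 2 (f i) ≤ Real.logb 2 (∑ i, w i * f i) := by
  classical
  set S := Finset.univ.filter (fun i => w i ≠ 0) with hS
  have hsub : ∀ g : ι → ℝ, ∑ i, w i * g i = ∑ i ∈ S, w i * g i := by
    intro g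
    rw [hS, Finset.sum_filter]
    exact Finset.sum_congr rfl (fun i _ => by by_cases h : w i = 0 <;> simp [h])
  have hwS : ∑ i ∈ S, w i = 1 := by
    rw [← hw1]
    symm
    rw [hS, Finset.sum_filter]
    exact Finset.sum_congr rfl (fun i _ => by by_cases h : w i = 0 <;> simp [h])
  have hkey : ∑ i ∈ S, w i * Real.log (f i) ≤ Real.log (∑ i ∈ S, w i * f i) := by
    have := (strictConcaveOn_log_Ioi.concaveOn).le_map_sum
      (t := S) (w := w) (p := f) (fun i _ => hw0 i) hwS
      (fun i hi => Set.mem_Ioi.mpr (hf i (Finset.mem_filter.mp hi).2))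
    simpa [smul_eq_mul] using this
  have h2 : (0:ℝ) < Real.log 2 := Real.log_pos one_lt_two
  rw [hsub (fun i => Real.logb 2 (f i)), hsub f]
  calc ∑ i ∈ S, w i * Real.logb 2 (f i)
      = (∑ i ∈ S, w i * Real.log (f i)) / Real.log 2 := by
        rw [Finset.sum_div]
        exact Finset.sum_congr rfl fun i _ => by rw [Real.logb]; ring
    _ ≤ Real.log (∑ i ∈ S, w i * f i) / Real.log 2 := by gcongr
    _ = Real.logb 2 (∑ i ∈ S, w i * f i) := rfl

/-- For jointly distributed random variables `(X, Y)` (described by their joint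
distribution `μ` on `α × β`) whose support is contained in a nonempty finite relation
`R ⊆ α × β`, and every real `p > 0`:
`(1/p)·H[X] + H[Y|X] ≤ log₂ ‖deg_R(B|A)‖_p`,
where `H[Y|X] = H[X,Y] - H[X]` and
`‖deg_R(B|A)‖_p = (Σ_{a ∈ α} deg_{R,α}(a)^p)^{1/p}`. -/
theorem lp_norm_entropy_inequality {α β : Type*} [Fintype α] [Fintype β]
    [DecidableEq α] [DecidableEq β]
    (R : Finset (α × β)) (hR : R.Nonempty)
    (μ : α × β → ℝ) (hμ0 : ∀ t, 0 ≤ μ t) (hμ1 : ∑ t, μ t = 1)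
    (hsupp : ∀ t, μ t ≠ 0 → t ∈ R)
    (p : ℝ) (hp : 0 < p) :
    (1 / p) * shannonEntropy (fun a => ∑ b, μ (a, b))
      + (shannonEntropy μ - shannonEntropy (fun a => ∑ b, μ (a, b)))
    ≤ Real.logb 2
        ((∑ a, ((R.filter (fun t => t.1 = a)).card : ℝ) ^ p) ^ (1 / p)) := by
  classical
  set μX : α → ℝ := fun a => ∑ b, μ (a, b) with hμX
  set degA : α → ℝ := fun a => ((R.filter (fun t => t.1 = a)).card : ℝ) with hdegA
  have hμX0 : ∀ a, 0 ≤ μX a := fun a => Finset.sum_nonneg fun b _ => hμ0 (a, b)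
  have hμle : ∀ t : α × β, μ t ≤ μX t.1 := by
    intro t
    have := Finset.single_le_sum (f := fun b => μ (t.1, b))
      (fun b _ => hμ0 (t.1, b)) (Finset.mem_univ t.2)
    simpa using this
  have hμX1 : ∑ a, μX a = 1 := by
    rw [← hμ1, Fintype.sum_prod_type]
  have hdeg0 : ∀ a, 0 ≤ degA a := fun a => Nat.cast_nonneg _
  have hdegR : ∀ t : α × β, t ∈ R → 1 ≤ degA t.1 := by
    intro t ht
    have : t ∈ R.filter (fun s => s.1 = t.1) := Finset.mem_filter.mpr ⟨ht, rfl⟩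
    have hc : 1 ≤ (R.filter (fun s => s.1 = t.1)).card := Finset.card_pos.mpr ⟨t, this⟩
    simp only [hdegA]
    exact_mod_cast hc
  have hμXpos : ∀ t : α × β, μ t ≠ 0 → 0 < μX t.1 := by
    intro t ht
    exact lt_of_lt_of_le (lt_of_le_of_ne (hμ0 t) (Ne.symm ht)) (hμle t)
  have hdegXpos : ∀ a, μX a ≠ 0 → 1 ≤ degA a := by
    intro a ha
    have hpos : 0 < μX a := lt_of_le_of_ne (hμX0 a) (Ne.symm ha)
    obtain ⟨b, _, hb⟩ := Finset.exists_ne_zero_of_sum_ne_zero (by simpa [hμX] using ha)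
    exact hdegR (a, b) (hsupp (a, b) hb)
  set D : ℝ := ∑ a, μX a * Real.logb 2 (degA a) with hD
  -- regrouping sums over pairs
  have regroup : ∀ f : α → ℝ, ∑ t : α × β, μ t * f t.1 = ∑ a, μX a * f a := by
    intro f
    rw [Fintype.sum_prod_type]
    exact Finset.sum_congr rfl fun a _ =>
      (Finset.sum_mul Finset.univ (fun b => μ (a, b)) (f a)).symm
  -- Step 1 : H[μ] - H[μX] ≤ D
  have step1 : shannonEntropy μ - shannonEntropy μX ≤ D := by
    set g : α × β → ℝ := fun t => μX t.1 / (μ t * degA t.1) with hg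
    have eq1 : ∑ t, μ t * Real.logb 2 (g t)
        = shannonEntropy μ - shannonEntropy μX - D := by
      have : ∀ t : α × β, μ t * Real.logb 2 (g t)
          = μ t * Real.logb 2 (μX t.1) - μ t * Real.logb 2 (μ t)
            - μ t * Real.logb 2 (degA t.1) := by
        intro t
        by_cases h : μ t = 0
        · simp [h]
        · have hX : μX t.1 ≠ 0 := ne_of_gt (hμXpos t h)
          have hd : degA t.1 ≠ 0 := by
            have := hdegR t (hsupp t h); linarith
          simp only [hg]
          rw [Real.logb_div hX (mul_ne_zero h hd), Real.logb_mul h hd]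
          ring
      rw [Finset.sum_congr rfl (fun t _ => this t)]
      rw [Finset.sum_sub_distrib, Finset.sum_sub_distrib]
      rw [regroup (fun a => Real.logb 2 (μX a)), regroup (fun a => Real.logb 2 (degA a))]
      simp only [shannonEntropy, hD]
      ring
    have hgpos : ∀ t : α × β, μ t ≠ 0 → 0 < g t := by
      intro t ht
      have hμt : 0 < μ t := lt_of_le_of_ne (hμ0 t) (Ne.symm ht)
      have hd : (0:ℝ) < degA t.1 := lt_of_lt_of_le one_pos (hdegR t (hsupp t ht))
      exact div_pos (hμXpos t ht) (mul_pos hμt hd)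
    have jensen := jensen_logb_aux μ g hμ0 hμ1 hgpos
    have hsum1 : ∑ t, μ t * g t ≤ 1 := by
      have e1 : ∑ t, μ t * g t
          = ∑ t ∈ Finset.univ.filter (fun t : α × β => μ t ≠ 0), μX t.1 / degA t.1 := by
        rw [Finset.sum_filter]
        refine Finset.sum_congr rfl fun t _ => ?_
        by_cases h : μ t = 0
        · simp [h]
        · rw [if_pos h]
          have hd : degA t.1 ≠ 0 := by have := hdegR t (hsupp t h); linarith
          simp only [hg]
          field_simp
      have e2 : ∑ t ∈ Finset.univ.filter (fun t : α × β => μ t ≠ 0), μX t.1 / degA t.1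
          ≤ ∑ t ∈ R, μX t.1 / degA t.1 := by
        refine Finset.sum_le_sum_of_subset_of_nonneg ?_ ?_
        · intro t ht
          exact hsupp t (Finset.mem_filter.mp ht).2
        · intro t ht _
          exact div_nonneg (hμX0 t.1) (hdeg0 t.1)
      have e3 : ∑ t ∈ R, μX t.1 / degA t.1 ≤ 1 := by
        rw [← Finset.sum_fiberwise R Prod.fst (fun t => μX t.1 / degA t.1)]
        rw [← hμX1]
        refine Finset.sum_le_sum fun a _ => ?_
        have : ∑ t ∈ R.filter (fun t => t.1 = a), μX t.1 / degA t.1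
            = (R.filter (fun t => t.1 = a)).card • (μX a / degA a) := by
          rw [← Finset.sum_const]
          refine Finset.sum_congr rfl fun t ht => ?_
          rw [(Finset.mem_filter.mp ht).2]
        rw [this, nsmul_eq_mul]
        by_cases hd : degA a = 0
        · rw [hdegA] at hd ⊢
          rw [hd]
          simp [hμX0 a]
        · have hc : ((R.filter (fun t => t.1 = a)).card : ℝ) = degA a := rfl
          rw [hc, mul_comm, div_mul_cancel₀ _ hd]
      linarith [e2, e3, e1.le, e1.ge]
    have : Real.logb 2 (∑ t, μ t * g t) ≤ 0 := by
      refine Real.logb_nonpos one_lt_two ?_ hsum1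
      exact Finset.sum_nonneg fun t _ => by
        by_cases h : μ t = 0
        · simp [h]
        · exact le_of_lt (mul_pos (lt_of_le_of_ne (hμ0 t) (Ne.symm h)) (hgpos t h))
    linarith [eq1.symm.le, eq1.le, jensen]
  -- Step 2 : (1/p) * H[μX] + D ≤ (1/p) * logb 2 (∑ a, degA a ^ p)
  set N : ℝ := ∑ a, degA a ^ p with hN
  have hNpos : 0 < N := by
    obtain ⟨t, ht⟩ := hR
    refine Finset.sum_pos' (fun a _ => Real.rpow_nonneg (hdeg0 a) p) ⟨t.1, Finset.mem_univ _, ?_⟩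
    exact Real.rpow_pos_of_pos (lt_of_lt_of_le one_pos (hdegR t ht)) p
  have step2 : (1/p) * shannonEntropy μX + D ≤ (1/p) * Real.logb 2 N := by
    set h : α → ℝ := fun a => degA a ^ p / μX a with hh
    have hhpos : ∀ a, μX a ≠ 0 → 0 < h a := by
      intro a ha
      have hd : (0:ℝ) < degA a := lt_of_lt_of_le one_pos (hdegXpos a ha)
      exact div_pos (Real.rpow_pos_of_pos hd p) (lt_of_le_of_ne (hμX0 a) (Ne.symm ha))
    have eq2 : ∑ a, μX a * Real.logb 2 (h a) = shannonEntropy μX + p * D := by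
      have : ∀ a, μX a * Real.logb 2 (h a)
          = p * (μX a * Real.logb 2 (degA a)) - μX a * Real.logb 2 (μX a) := by
        intro a
        by_cases ha : μX a = 0
        · simp [ha]
        · have hd : (0:ℝ) < degA a := lt_of_lt_of_le one_pos (hdegXpos a ha)
          simp only [hh]
          rw [Real.logb_div (ne_of_gt (Real.rpow_pos_of_pos hd p)) ha,
            Real.logb_rpow_eq_mul_logb_of_pos hd]
          ring
      rw [Finset.sum_congr rfl (fun a _ => this a), Finset.sum_sub_distrib,
        ← Finset.mul_sum]
      simp only [shannonEntropy, hD]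
      ring
    have jensen := jensen_logb_aux μX h hμX0 hμX1 hhpos
    have hle : ∑ a, μX a * h a ≤ N := by
      refine Finset.sum_le_sum fun a _ => ?_
      by_cases ha : μX a = 0
      · simp [ha, Real.rpow_nonneg (hdeg0 a) p]
      · simp only [hh]
        rw [mul_div_cancel₀ _ ha]
    have hposS : 0 < ∑ a, μX a * h a := by
      have : ∃ a, μX a ≠ 0 := by
        by_contra hcon
        push_neg at hcon
        rw [Finset.sum_congr rfl (fun a _ => hcon a)] at hμX1
        simp at hμX1
      obtain ⟨a, ha⟩ := this
      refine Finset.sum_pos' (fun a' _ => ?_) ⟨a, Finset.mem_univ _, ?_⟩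
      · by_cases h' : μX a' = 0
        · simp [h']
        · exact le_of_lt (mul_pos (lt_of_le_of_ne (hμX0 a') (Ne.symm h')) (hhpos a' h'))
      · exact mul_pos (lt_of_le_of_ne (hμX0 a) (Ne.symm ha)) (hhpos a ha)
    have hlog : Real.logb 2 (∑ a, μX a * h a) ≤ Real.logb 2 N :=
      Real.logb_le_logb_of_le one_lt_two hposS hle
    have : shannonEntropy μX + p * D ≤ Real.logb 2 N := by
      rw [← eq2]; linarith [jensen, hlog]
    have hp' : 0 < 1/p := by positivity
    calc (1/p) * shannonEntropy μX + D
        = (1/p) * (shannonEntropy μX + p * D) := by field_simp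
      _ ≤ (1/p) * Real.logb 2 N := by
          exact mul_le_mul_of_nonneg_left this (le_of_lt hp')
  have hfinal : Real.logb 2 (N ^ (1/p)) = (1/p) * Real.logb 2 N :=
    Real.logb_rpow_eq_mul_logb_of_pos hNpos
  calc (1/p) * shannonEntropy μX + (shannonEntropy μ - shannonEntropy μX)
      ≤ (1/p) * shannonEntropy μX + D := by linarith [step1]
    _ ≤ (1/p) * Real.logb 2 N := step2
    _ = Real.logb 2 (N ^ (1/p)) := hfinal.symm
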